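/- Let Z be a {0,1}-valued random variable, X a random element, and e(X) = P(Z=1|X) with 0 < e(X) < 1 almost surely. If Z is conditionally independent of a random variable W given X, then Z is conditionally independent of W given e(X); equivalently, P(Z=1 | W, e(X)) = e(X) almost surely. -/

import Mathlib

open MeasureTheory ProbabilityTheory

/-- balancing property of the propensity score: if `Z ⟂ W | X`
and `e(X) = P(Z=1|X) = E[Z|X]` with `0 < e(X) < 1` a.s., then
`P(Z=1 | W, e(X)) = e(X)` a.s., i.e. the conditional expectation of `Z` given
the σ-algebra generated by `(W, e(X))` is a.e. equal to `e(X)`. -/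
theorem propensity_balancing
    {Ω : Type*} [mΩ : MeasurableSpace Ω] [StandardBorelSpace Ω]
    (μ : Measure Ω) [IsProbabilityMeasure μ]
    {𝒳 : Type*} [MeasurableSpace 𝒳] (X : Ω → 𝒳) (hX : Measurable X)
    {𝒲 : Type*} [MeasurableSpace 𝒲] (W : Ω → 𝒲) (hW : Measurable W)
    (Z : Ω → ℝ) (hZ : Measurable Z) (hZ01 : ∀ ω, Z ω = 0 ∨ Z ω = 1)
    (mX : MeasurableSpace Ω) (hmX : mX = MeasurableSpace.comap X inferInstance)
    (hmXle : mX ≤ mΩ)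
    (hindep : @CondIndepFun Ω mX mΩ _ hmXle ℝ 𝒲 _ _ Z W μ _)
    (e : Ω → ℝ) (he : e = μ[Z | mX])
    (hpos : ∀ᵐ ω ∂μ, 0 < e ω ∧ e ω < 1) :
    μ[Z | MeasurableSpace.comap (fun ω => (W ω, e ω)) inferInstance] =ᵐ[μ] e := by
  classical
  letI : MeasurableSpace Ω := mΩ
  -- `Z` is the indicator of the set `S = {Z = 1}`
  set S : Set Ω := Z ⁻¹' {1} with hS_def
  have hS : MeasurableSet[mΩ] S := hZ (measurableSet_singleton 1)
  have hZeq : Z = S.indicator (fun _ => (1 : ℝ)) := by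
    funext ω
    rcases hZ01 ω with h | h
    · have hωS : ω ∉ S := by simp [hS_def, Set.mem_preimage, h]
      simp [Set.indicator_apply, hωS, h]
    · have hωS : ω ∈ S := by simp [hS_def, Set.mem_preimage, h]
      simp [Set.indicator_apply, hωS, h]
  have hZint : Integrable Z μ := by
    rw [hZeq]; exact (integrable_const (1 : ℝ)).indicator (μ := μ) hS
  have heint : Integrable e μ := he ▸ integrable_condExp
  have hesmX : StronglyMeasurable[mX] e := he ▸ stronglyMeasurable_condExp
  have hemX : Measurable[mX] e := hesmX.measurable
  -- the intermediate σ-algebra generated by `(X, W)`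
  set P : Ω → 𝒳 × 𝒲 := fun ω => (X ω, W ω) with hP_def
  set m2 : MeasurableSpace Ω := MeasurableSpace.comap P inferInstance with hm2
  letI : MeasurableSpace Ω := mΩ
  have hm2le : m2 ≤ mΩ := (hX.prodMk hW).comap_le
  have hPm2 : Measurable[m2] P := measurable_iff_comap_le.mpr le_rfl
  have hXm2 : Measurable[m2] X := measurable_fst.comp hPm2
  have hWm2 : Measurable[m2] W := measurable_snd.comp hPm2
  have hmXle2 : mX ≤ m2 := hmX ▸ hXm2.comap_le
  have hem2 : Measurable[m2] e := hemX.mono hmXle2 le_rfl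
  -- rewrite the conditional independence hypothesis
  rw [condIndepFun_iff _ _ _ _ hZ hW] at hindep
  -- KEY: `∫_s Z = ∫_s e` for every `s` measurable w.r.t. `m2`
  have key : ∀ s : Set Ω, MeasurableSet[m2] s →
      ∫ ω in s, Z ω ∂μ = ∫ ω in s, e ω ∂μ := by
    have hgen : m2 = MeasurableSpace.generateFrom
        ((P ⁻¹' ·) '' Set.image2 (· ×ˢ ·) { s : Set 𝒳 | MeasurableSet s }
          { t : Set 𝒲 | MeasurableSet t }) := by
      rw [hm2, ← generateFrom_prod, MeasurableSpace.comap_generateFrom]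
    have hpi : IsPiSystem ((P ⁻¹' ·) '' Set.image2 (· ×ˢ ·)
        { s : Set 𝒳 | MeasurableSet s } { t : Set 𝒲 | MeasurableSet t }) :=
      isPiSystem_prod.comap P
    intro s hs
    refine MeasurableSpace.induction_on_inter (m := m2)
      (C := fun s _ => ∫ ω in s, Z ω ∂μ = ∫ ω in s, e ω ∂μ) hgen hpi ?_ ?_ ?_ ?_ s hs
    · simp
    · rintro t ht
      obtain ⟨-, ⟨A, hA, B, hB, rfl⟩, rfl⟩ := ht
      have hpre : P ⁻¹' (A ×ˢ B) = (X ⁻¹' A) ∩ (W ⁻¹' B) := Set.mk_preimage_prod X W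
      set U : Set Ω := X ⁻¹' A with hU_def
      set T : Set Ω := W ⁻¹' B with hT_def
      have hU : MeasurableSet[mX] U := hmX ▸ ⟨A, hA, rfl⟩
      have hUΩ : MeasurableSet[mΩ] U := hmXle _ hU
      have hT : MeasurableSet[mΩ] T := hW hB
      -- `1_T * Z = 1_{S ∩ T}`
      have hind : T.indicator Z = (S ∩ T).indicator (fun _ => (1 : ℝ)) := by
        funext ω
        by_cases hω : ω ∈ T
        · rcases hZ01 ω with h | h
          · have hωS : ω ∉ S := by simp [hS_def, Set.mem_preimage, h]
            simp [Set.indicator_apply, hω, hωS, h]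
          · have hωS : ω ∈ S := by simp [hS_def, Set.mem_preimage, h]
            simp [Set.indicator_apply, hω, hωS, h]
        · have : ω ∉ S ∩ T := fun hmem => hω hmem.2
          simp [Set.indicator_apply, hω, this]
      -- conditional independence applied to `S` and `T`
      have hST : (μ⟦S ∩ T | mX⟧) =ᵐ[μ] (μ⟦S | mX⟧) * (μ⟦T | mX⟧) :=
        hindep S T ⟨{1}, measurableSet_singleton 1, rfl⟩ ⟨B, hB, rfl⟩
      have heS : (μ⟦S | mX⟧) = e := by rw [he, hZeq]
      -- pull-out property: `μ[1_T * e | mX] = e * μ⟦T|mX⟧`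
      have hmulfun : e * T.indicator (fun _ => (1 : ℝ)) = T.indicator e := by
        funext ω; by_cases hω : ω ∈ T <;> simp [Set.indicator_apply, hω]
      have hTe_int : Integrable (e * T.indicator fun _ => (1 : ℝ)) μ := by
        rw [hmulfun]; exact heint.indicator (μ := μ) hT
      have hmul : (μ[T.indicator e | mX]) =ᵐ[μ] e * (μ⟦T | mX⟧) := by
        have := condExp_mul_of_stronglyMeasurable_left (μ := μ) (mΩ := mΩ) hesmX hTe_int
          ((integrable_const (1 : ℝ)).indicator (μ := μ) hT)
        rwa [hmulfun] at this
      -- the computation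
      have h1 : ∫ ω in P ⁻¹' (A ×ˢ B), Z ω ∂μ = ∫ ω in U, T.indicator Z ω ∂μ := by
        rw [setIntegral_indicator (μ := μ) hT, hpre]
      have h2 : ∫ ω in U, T.indicator Z ω ∂μ
          = ∫ ω in U, (μ⟦S ∩ T | mX⟧) ω ∂μ := by
        rw [hind, setIntegral_condExp hmXle ((integrable_const (1 : ℝ)).indicator (μ := μ)
          (hS.inter hT)) hU]
      have h3 : ∫ ω in U, (μ⟦S ∩ T | mX⟧) ω ∂μ
          = ∫ ω in U, (μ[T.indicator e | mX]) ω ∂μ := by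
        refine setIntegral_congr_ae hUΩ ?_
        filter_upwards [hST, hmul] with ω h1' h2' _
        rw [h1', h2', heS]
      have h4 : ∫ ω in U, (μ[T.indicator e | mX]) ω ∂μ
          = ∫ ω in P ⁻¹' (A ×ˢ B), e ω ∂μ := by
        rw [setIntegral_condExp hmXle (heint.indicator (μ := μ) hT) hU,
          setIntegral_indicator (μ := μ) hT, hpre]
      rw [h1, h2, h3, h4]
    · rintro t htm iht
      have htot : ∫ ω, Z ω ∂μ = ∫ ω, e ω ∂μ := by
        rw [he]; exact (integral_condExp (μ := μ) (f := Z) hmXle).symm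
      have hZc := integral_add_compl (μ := μ) (hm2le _ htm) hZint
      have hec := integral_add_compl (μ := μ) (hm2le _ htm) heint
      linarith
    · rintro f hdisj hfm ihf
      rw [integral_iUnion (μ := μ) (fun i => hm2le _ (hfm i)) hdisj hZint.integrableOn,
        integral_iUnion (μ := μ) (fun i => hm2le _ (hfm i)) hdisj heint.integrableOn]
      exact tsum_congr ihf
  -- the target σ-algebra is between `σ(e)` and `m2`
  set mWE : MeasurableSpace Ω :=
    MeasurableSpace.comap (fun ω => (W ω, e ω)) inferInstance with hmWE
  letI : MeasurableSpace Ω := mΩ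
  have hWEm2 : Measurable[m2] (fun ω => (W ω, e ω)) := hWm2.prodMk hem2
  have hWEle : mWE ≤ m2 := hWEm2.comap_le
  have hWEleΩ : mWE ≤ mΩ := hWEle.trans hm2le
  have heWE : Measurable[mWE] e :=
    measurable_snd.comp (measurable_iff_comap_le.mpr le_rfl)
  have hesWE : StronglyMeasurable[mWE] e := heWE.stronglyMeasurable
  exact (ae_eq_condExp_of_forall_setIntegral_eq hWEleΩ hZint
    (fun s _ _ => heint.integrableOn)
    (fun s hs _ => (key s (hWEle s hs)).symm)
    (hesWE.aestronglyMeasurable (μ := μ))).symm
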